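/- For all α, β, γ ∈ ℝ, the characteristic polynomial of the partial transpose over the second qubit of ρ̃₀₀(α,β,γ) factors as (x − λ₁)(x − λ₂)(x − λ₃)(x − λ₄), where λ₁ = −αβ(1−γ)²/2, λ₂ = β²(1−γ)²/2, λ₃ = α²(1+γ²)/2, and λ₄ = αβ(1−γ²)/2. -/
import Mathlib


open Matrix Kronecker Polynomial

/-- The identification of the pair index (a,b) ∈ {0,1}² with the basis ordering
|00⟩,|01⟩,|10⟩,|11⟩ of Fin 4, i.e. (a,b) ↦ 2a + b. -/
def idx (p : Fin 2 × Fin 2) : Fin 4 := ⟨2 * p.1.val + p.2.val, by omega⟩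

/-- The (unnormalized) doubly-reflected state ρ̃₀₀(α,β,γ), as a 4×4 matrix in the
ordered basis |00⟩,|01⟩,|10⟩,|11⟩. -/
noncomputable def ρ00Fin4 (α β γ : ℝ) : Matrix (Fin 4) (Fin 4) ℂ :=
  !![((α^2 * (1 + γ^2))/2 : ℝ), 0, 0, ((α * β * (1 - γ))/2 : ℝ);
     0, ((α * β * γ * (1 - γ))/2 : ℝ), 0, 0;
     0, 0, ((α * β * γ * (1 - γ))/2 : ℝ), 0;
     ((α * β * (1 - γ))/2 : ℝ), 0, 0, ((β^2 * (1 - γ)^2)/2 : ℝ)]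

/-- ρ̃₀₀(α,β,γ), indexed by qubit pairs (a,b) ∈ {0,1}². -/
noncomputable def ρ00 (α β γ : ℝ) : Matrix (Fin 2 × Fin 2) (Fin 2 × Fin 2) ℂ :=
  (ρ00Fin4 α β γ).submatrix idx idx

/-- Partial transpose over the second qubit:
M^{T_B}[(a,b),(a',b')] = M[(a,b'),(a',b)]. -/
def ptB (M : Matrix (Fin 2 × Fin 2) (Fin 2 × Fin 2) ℂ) :
    Matrix (Fin 2 × Fin 2) (Fin 2 × Fin 2) ℂ :=
  Matrix.of fun p q => M (p.1, q.2) (q.1, p.2)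

def idxE : Fin 2 × Fin 2 ≃ Fin 4 where
  toFun := idx
  invFun n := (⟨n.val / 2, by omega⟩, ⟨n.val % 2, by omega⟩)
  left_inv p := by
    rcases p with ⟨a, b⟩
    fin_cases a <;> fin_cases b <;> rfl
  right_inv n := by fin_cases n <;> rfl

noncomputable def ptMat (α β γ : ℝ) : Matrix (Fin 4) (Fin 4) ℂ :=
  !![((α^2 * (1 + γ^2))/2 : ℝ), 0, 0, 0;
     0, ((α * β * γ * (1 - γ))/2 : ℝ), ((α * β * (1 - γ))/2 : ℝ), 0;
     0, ((α * β * (1 - γ))/2 : ℝ), ((α * β * γ * (1 - γ))/2 : ℝ), 0;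
     0, 0, 0, ((β^2 * (1 - γ)^2)/2 : ℝ)]

lemma charpoly_aux (p d c q : ℂ) :
    (!![p, 0, 0, 0; 0, d, c, 0; 0, c, d, 0; 0, 0, 0, q] :
      Matrix (Fin 4) (Fin 4) ℂ).charpoly =
    (X - C (d - c)) * (X - C q) * (X - C p) * (X - C (d + c)) := by
  rw [Matrix.charpoly]
  simp [Matrix.det_succ_row_zero, Fin.sum_univ_succ, Matrix.charmatrix_apply_eq,
    Matrix.charmatrix_apply_ne, Fin.succ, C_sub, C_add]
  ring

lemma ptB_eq (α β γ : ℝ) :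
    ptB (ρ00 α β γ) = (ptMat α β γ).submatrix idxE idxE := by
  ext ⟨a, b⟩ ⟨c, d⟩
  fin_cases a <;> fin_cases b <;> fin_cases c <;> fin_cases d <;>
    simp [ptB, ρ00, ρ00Fin4, ptMat, idx, idxE, Matrix.submatrix] <;> rfl

theorem reflected_state_partial_transpose_charpoly (α β γ : ℝ) :
    (ptB (ρ00 α β γ)).charpoly =
      (X - C ((-(α * β * (1 - γ)^2 / 2) : ℝ) : ℂ)) *
      (X - C (((β^2 * (1 - γ)^2 / 2) : ℝ) : ℂ)) *
      (X - C (((α^2 * (1 + γ^2) / 2) : ℝ) : ℂ)) *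
      (X - C (((α * β * (1 - γ^2) / 2) : ℝ) : ℂ)) := by
  rw [ptB_eq]
  have : (ptMat α β γ).submatrix idxE idxE
      = Matrix.reindex idxE.symm idxE.symm (ptMat α β γ) := by
    ext p q; simp [Matrix.reindex]
  rw [this, Matrix.charpoly_reindex, ptMat, charpoly_aux]
  congr 1
  · congr 2
    push_cast; ring
  · congr 1 <;> congr 1 <;> push_cast <;> ring
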